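/- Let D ≥ 1, J ≥ 1, λ₁, …, λ_D > 0, and x, x' ∈ ℝ^D. Let ω₁, …, ω_J ∈ ℝ^D be i.i.d. random vectors, each with independent coordinates distributed as N(0, 2/λ_d²) for d = 1, …, D, and let φ be the random Fourier feature map built from ω₁, …, ω_J. Then E[ φ(x)ᵀ φ(x') ] = k_SE-ARD(x, x'); that is, the random feature inner product is an unbiased estimator of the SE-ARD kernel. -/

import Mathlib

open Matrix MeasureTheory ProbabilityTheory

/-- Random Fourier feature map `φ : ℝ^D → ℝ^{2J}` built from frequency vectors
`ω₁, …, ω_J`: for each `j`, the pair of components `(1/√J) sin(xᵀω_j)` and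
`(1/√J) cos(xᵀω_j)` (the `2J` coordinates are indexed by `Fin J × Bool`). -/
noncomputable def rff {D J : ℕ} (ω : Fin J → (Fin D → ℝ)) (x : Fin D → ℝ) :
    Fin J × Bool → ℝ :=
  fun p => (1 / Real.sqrt J) *
    (if p.2 then Real.cos (x ⬝ᵥ ω p.1) else Real.sin (x ⬝ᵥ ω p.1))

lemma gauss_char (v : NNReal) (hv : v ≠ 0) (c : ℝ) :
    ∫ y : ℝ, Complex.exp (c * y * Complex.I) ∂(gaussianReal 0 v) =
      (Real.exp (-(v:ℝ) * c ^ 2 / 2) : ℂ) := by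
  have hvpos : (0:ℝ) < v := by positivity
  rw [gaussianReal_of_var_ne_zero 0 hv, gaussianPDF_def]
  simp only [ENNReal.ofReal]
  rw [integral_withDensity_eq_integral_smul
    ((measurable_gaussianPDFReal 0 v).real_toNNReal)]
  simp only [NNReal.smul_def, Real.coe_toNNReal _ (gaussianPDFReal_nonneg 0 v _),
    Complex.real_smul]
  simp only [gaussianPDFReal, sub_zero]
  set b : ℂ := ((1/(2*(v:ℝ)) : ℝ) : ℂ) with hbdef
  have hb : 0 < b.re := by
    rw [hbdef, Complex.ofReal_re]
    positivity
  have h := fourierIntegral_gaussian hb (c : ℂ)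
  have hsq : (0:ℝ) < Real.sqrt (2 * Real.pi * v) := by
    apply Real.sqrt_pos.mpr
    positivity
  calc ∫ y : ℝ, ((((Real.sqrt (2 * Real.pi * v))⁻¹ * Real.exp (-y^2 / (2*v))) : ℝ) : ℂ)
        * Complex.exp (c * y * Complex.I)
      = ((((Real.sqrt (2 * Real.pi * v))⁻¹ : ℝ)) : ℂ) *
        ∫ y : ℝ, Complex.exp (Complex.I * c * y) * Complex.exp (-b * y^2) := by
        rw [← integral_const_mul]
        congr 1; funext y
        push_cast [Complex.ofReal_exp]
        rw [mul_assoc, ← Complex.exp_add, ← Complex.exp_add]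
        congr 2
        rw [hbdef]
        have : (v:ℂ) ≠ 0 := by exact_mod_cast hvpos.ne'
        push_cast
        field_simp
        ring
    _ = ((((Real.sqrt (2 * Real.pi * v))⁻¹ : ℝ)) : ℂ) *
        ((↑Real.pi / b) ^ (1/2 : ℂ) * Complex.exp (-(c:ℂ)^2 / (4*b))) := by rw [h]
    _ = (Real.exp (-(v:ℝ) * c ^ 2 / 2) : ℂ) := by
        have hπb : (↑Real.pi / b) = ((2 * Real.pi * (v:ℝ) : ℝ) : ℂ) := by
          rw [hbdef]
          have : ((2*(v:ℝ) : ℝ) : ℂ) ≠ 0 := by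
            simp only [ne_eq, Complex.ofReal_eq_zero]
            positivity
          push_cast
          field_simp
        have hcpow : ((2 * Real.pi * (v:ℝ) : ℝ) : ℂ) ^ (1/2 : ℂ)
            = ((Real.sqrt (2 * Real.pi * v) : ℝ) : ℂ) := by
          rw [show ((1:ℂ)/2) = ((1/2 : ℝ) : ℂ) by norm_num]
          rw [← Complex.ofReal_cpow (by positivity)]
          norm_num [Real.sqrt_eq_rpow]
        have harg : (-(c:ℂ)^2 / (4*b)) = ((-(v:ℝ) * c^2/2 : ℝ) : ℂ) := by
          rw [hbdef]
          have : ((2*(v:ℝ) : ℝ) : ℂ) ≠ 0 := by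
            simp only [ne_eq, Complex.ofReal_eq_zero]
            positivity
          push_cast
          field_simp
          ring
        rw [hπb, hcpow, harg, ← Complex.ofReal_exp, ← mul_assoc, ← Complex.ofReal_mul,
          inv_mul_cancel₀ hsq.ne', Complex.ofReal_one, one_mul]

lemma gauss_pi {D : ℕ} (lam : Fin D → ℝ) (hlam : ∀ d, 0 < lam d) (t : Fin D → ℝ) :
    ∫ w : Fin D → ℝ, Real.cos (t ⬝ᵥ w)
        ∂(Measure.pi fun d => gaussianReal 0 (2 / lam d ^ 2).toNNReal) =
      Real.exp (-∑ d, t d ^ 2 / lam d ^ 2) := by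
  have hvpos : ∀ d, (0:ℝ) < 2 / lam d ^ 2 := fun d => by have := hlam d; positivity
  have hvne : ∀ d, (2 / lam d ^ 2).toNNReal ≠ 0 :=
    fun d => (Real.toNNReal_pos.mpr (hvpos d)).ne'
  have hvcoe : ∀ d, (((2 / lam d ^ 2).toNNReal : ℝ)) = 2 / lam d ^ 2 :=
    fun d => Real.coe_toNNReal _ (hvpos d).le
  have hcont : Continuous fun w : Fin D → ℝ => Complex.exp ((t ⬝ᵥ w : ℝ) * Complex.I) := by
    apply Complex.continuous_exp.comp
    apply Continuous.mul _ continuous_const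
    apply Complex.continuous_ofReal.comp
    exact continuous_finset_sum _ fun d _ => continuous_const.mul (continuous_apply d)
  have hInt : Integrable (fun w : Fin D → ℝ => Complex.exp ((t ⬝ᵥ w : ℝ) * Complex.I))
      (Measure.pi fun d => gaussianReal 0 (2 / lam d ^ 2).toNNReal) := by
    refine (integrable_const (1:ℝ)).mono' hcont.aestronglyMeasurable (ae_of_all _ fun w => ?_)
    simp [Complex.norm_exp]
  have hre : ∀ w : Fin D → ℝ, Real.cos (t ⬝ᵥ w) = (Complex.exp ((t ⬝ᵥ w : ℝ) * Complex.I)).re :=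
    fun w => (Complex.exp_ofReal_mul_I_re _).symm
  simp_rw [hre, ← RCLike.re_to_complex]
  rw [integral_re hInt, RCLike.re_to_complex]
  have hprod : (fun w : Fin D → ℝ => Complex.exp ((t ⬝ᵥ w : ℝ) * Complex.I)) =
      fun w => ∏ d, Complex.exp ((t d : ℂ) * (w d : ℂ) * Complex.I) := by
    funext w
    rw [← Complex.exp_sum]
    congr 1
    rw [← Finset.sum_mul]
    congr 1
    push_cast [dotProduct]
    rfl
  rw [hprod]
  have key := integral_fintype_prod_eq_prod (𝕜 := ℂ) (ι := Fin D) (E := fun _ => ℝ)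
    (fun d y => Complex.exp ((t d : ℂ) * (y : ℂ) * Complex.I))
    (μ := fun d => gaussianReal 0 (2 / lam d ^ 2).toNNReal)
  have key' : (∫ w : Fin D → ℝ, ∏ d, Complex.exp ((t d : ℂ) * (w d : ℂ) * Complex.I)
      ∂(Measure.pi fun d => gaussianReal 0 (2 / lam d ^ 2).toNNReal)) =
      ∏ d, ∫ y : ℝ, Complex.exp ((t d : ℂ) * (y : ℂ) * Complex.I)
        ∂(gaussianReal 0 (2 / lam d ^ 2).toNNReal) := key
  rw [key']
  have hcoord : ∀ d, (∫ y : ℝ, Complex.exp ((t d : ℂ) * (y : ℂ) * Complex.I)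
      ∂(gaussianReal 0 (2 / lam d ^ 2).toNNReal)) =
      ((Real.exp (-(t d ^ 2 / lam d ^ 2)) : ℝ) : ℂ) := by
    intro d
    rw [gauss_char _ (hvne d) (t d)]
    congr 1
    rw [hvcoe d]
    have := hlam d
    field_simp
  simp_rw [hcoord]
  rw [← Complex.ofReal_prod]
  rw [Complex.ofReal_re, ← Real.exp_sum]
  congr 1
  rw [← Finset.sum_neg_distrib]

/-- With `ω₁, …, ω_J` i.i.d., each with independent coordinates `N(0, 2/λ_d²)`, the
random feature inner product is an unbiased estimator of the SE-ARD kernel: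
`E[φ(x)ᵀφ(x')] = exp(−Σ_d (x_d − x'_d)²/λ_d²)`. -/
theorem stmt10 {D J : ℕ} (hD : 1 ≤ D) (hJ : 1 ≤ J) (lam : Fin D → ℝ)
    (hlam : ∀ d, 0 < lam d) (x x' : Fin D → ℝ) :
    ∫ ω : Fin J → (Fin D → ℝ), rff ω x ⬝ᵥ rff ω x'
        ∂(Measure.pi fun _ : Fin J =>
            Measure.pi fun d => gaussianReal 0 (2 / lam d ^ 2).toNNReal) =
      Real.exp (-∑ d, (x d - x' d) ^ 2 / lam d ^ 2) := by
  set t : Fin D → ℝ := fun d => x d - x' d with ht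
  set μ : Measure (Fin D → ℝ) := Measure.pi fun d => gaussianReal 0 (2 / lam d ^ 2).toNNReal
    with hμ
  have hJpos : (0:ℝ) < J := by exact_mod_cast hJ
  -- pointwise identity
  have hpt : ∀ ω : Fin J → (Fin D → ℝ),
      rff ω x ⬝ᵥ rff ω x' = (J:ℝ)⁻¹ * ∑ j, Real.cos (t ⬝ᵥ ω j) := by
    intro ω
    rw [Finset.mul_sum]
    simp only [dotProduct, rff, Fintype.sum_prod_type, Fintype.sum_bool]
    refine Finset.sum_congr rfl fun j _ => ?_
    have h1 : (1 / Real.sqrt J) * (1 / Real.sqrt J) = (J:ℝ)⁻¹ := by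
      rw [div_mul_div_comm, one_mul, Real.mul_self_sqrt hJpos.le]
      simp
    have h2 : (∑ i, x i * ω j i) - (∑ i, x' i * ω j i) = ∑ i, t i * ω j i := by
      simp only [ht, ← Finset.sum_sub_distrib, sub_mul]
    simp only [if_true, Bool.false_eq_true, if_false]
    rw [← h2, Real.cos_sub, ← h1]
    ring
  simp_rw [hpt]
  have hcos_cont : Continuous fun w : Fin D → ℝ => Real.cos (t ⬝ᵥ w) :=
    Real.continuous_cos.comp
      (continuous_finset_sum _ fun d _ => continuous_const.mul (continuous_apply d))
  have hIntc : ∀ j : Fin J, Integrable (fun ω : Fin J → (Fin D → ℝ) => Real.cos (t ⬝ᵥ ω j))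
      (Measure.pi fun _ : Fin J => μ) := by
    intro j
    refine (integrable_const (1:ℝ)).mono'
      ((hcos_cont.comp (continuous_apply j)).aestronglyMeasurable) (ae_of_all _ fun ω => ?_)
    rw [Real.norm_eq_abs]
    exact Real.abs_cos_le_one _
  rw [integral_const_mul, integral_finset_sum _ fun j _ => hIntc j]
  have hC : ∀ j : Fin J, (∫ ω : Fin J → (Fin D → ℝ), Real.cos (t ⬝ᵥ ω j)
      ∂(Measure.pi fun _ : Fin J => μ)) = ∫ w, Real.cos (t ⬝ᵥ w) ∂μ := by
    intro j
    have hfe : (fun ω : Fin J → (Fin D → ℝ) => Real.cos (t ⬝ᵥ ω j)) =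
        fun ω => ∏ i, (if i = j then Real.cos (t ⬝ᵥ ω i) else 1) := by
      funext ω
      rw [Finset.prod_ite_eq' Finset.univ j (fun i => Real.cos (t ⬝ᵥ ω i))]
      simp
    rw [hfe]
    haveI : SigmaFinite μ := by rw [hμ]; infer_instance
    have key := integral_fintype_prod_eq_prod (𝕜 := ℝ) (ι := Fin J) (E := fun _ => Fin D → ℝ)
      (fun i y => if i = j then Real.cos (t ⬝ᵥ y) else 1)
      (μ := fun _ => μ)
    have key' : (∫ ω : Fin J → (Fin D → ℝ), ∏ i, (if i = j then Real.cos (t ⬝ᵥ ω i) else 1)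
        ∂(Measure.pi fun _ : Fin J => μ)) =
        ∏ i : Fin J, ∫ y : Fin D → ℝ, (if i = j then Real.cos (t ⬝ᵥ y) else 1) ∂μ := key
    rw [key']
    have hfac : ∀ i : Fin J, (∫ y : Fin D → ℝ, (if i = j then Real.cos (t ⬝ᵥ y) else 1) ∂μ)
        = if i = j then (∫ w, Real.cos (t ⬝ᵥ w) ∂μ) else 1 := by
      intro i
      by_cases h : i = j <;> simp [h]
    simp_rw [hfac]
    rw [Finset.prod_ite_eq' Finset.univ j (fun _ => ∫ w, Real.cos (t ⬝ᵥ w) ∂μ)]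
    simp
  simp_rw [hC]
  rw [hμ, gauss_pi lam hlam t]
  rw [Finset.sum_const, Finset.card_univ, Fintype.card_fin, nsmul_eq_mul, ← mul_assoc,
    inv_mul_cancel₀ hJpos.ne', one_mul]
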